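/- The elements {p(A) : A an atomic set partition} freely generate NCSym as an algebra: the unique ℚ-algebra homomorphism from the free associative ℚ-algebra on the set of atomic set partitions to NCSym sending the generator indexed by A to p(A) is an algebra isomorphism. In particular, the p(A) for atomic A are algebraically independent. -/

import Mathlib

open Finset

/-- `[n] = {1, …, n}` as a finset of naturals. -/
def seg (n : ℕ) : Finset ℕ := Finset.Icc 1 n

/-- A (raw) collection of blocks. -/
abbrev Blocks := Finset (Finset ℕ)

/-- The ground set (union of the blocks). -/
def ground (A : Blocks) : Finset ℕ := A.sup id

/-- `A` is a set partition of the finite set `X`: nonempty pairwise disjoint blocks with union `X`. -/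
def IsPartitionOf (A : Blocks) (X : Finset ℕ) : Prop :=
  (∀ B ∈ A, B.Nonempty) ∧ (A : Set (Finset ℕ)).PairwiseDisjoint id ∧ ground A = X

/-- `A` is a set partition of `[n]`. -/
def IsSP (A : Blocks) (n : ℕ) : Prop := IsPartitionOf A (seg n)

/-- The unique increasing bijection from `X` onto `[#X]`. -/
def stdFun (X : Finset ℕ) (x : ℕ) : ℕ := (X.filter (· < x)).card + 1

/-- Standardization of a collection of blocks. -/
def stdP (A : Blocks) : Blocks := A.image fun B => B.image (stdFun (ground A))

/-- Shift all entries of all blocks up by `k`. -/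
def shiftP (A : Blocks) (k : ℕ) : Blocks := A.image fun B => B.image (· + k)

/-- Concatenation `A | B` of set partitions: shift `B` up by the weight of `A`. -/
def concatP (A B : Blocks) : Blocks := A ∪ shiftP B (ground A).card

/-- The `i`-th block of `A` (1-based), where blocks are ordered by increasing minima. -/
def blockAt (A : Blocks) (i : ℕ) : Finset ℕ :=
  (A.filter fun B => (A.filter fun C => C.min ≤ B.min).card = i).sup id

/-- `A_J` : the subcollection of blocks of `A` indexed by `J`. -/
def subColl (A : Blocks) (J : Finset ℕ) : Blocks := J.image (blockAt A)

/-- `A` is an atomic set partition of `[n]`. -/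
def IsAtomicSP (A : Blocks) (n : ℕ) : Prop :=
  IsSP A n ∧ 1 ≤ n ∧
    ¬ ∃ m B C, 0 < m ∧ m < n ∧ IsSP B m ∧ IsSP C (n - m) ∧ A = concatP B C

/-- Raw set compositions: words whose letters are finsets of naturals. -/
abbrev SComp := List (Finset ℕ)

/-- The union of the letters of a word. -/
def sunion (γ : SComp) : Finset ℕ := γ.foldr (· ∪ ·) ∅

/-- `γ` is a set composition of `K`. -/
def IsSCompOf (γ : SComp) (K : Finset ℕ) : Prop :=
  (∀ B ∈ γ, B.Nonempty) ∧ γ.Pairwise Disjoint ∧ sunion γ = K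

/-- `γ[A] = std(A_{γ₁}) | std(A_{γ₂}) | ⋯ | std(A_{γₛ})`. -/
def applyComp (γ : SComp) (A : Blocks) : Blocks :=
  (γ.map fun g => stdP (subColl A g)).foldr concatP ∅

abbrev NCSym := Blocks →₀ ℚ

/-- The basis element of `NCSym` indexed by a set partition. -/
noncomputable def bas (A : Blocks) : NCSym := Finsupp.single A 1

/-- `p(A) = ∑_{γ ∈ Γ'(r)} (-1)^{ℓ(γ)-1} γ[A]`. -/
noncomputable def pNC (A : Blocks) (r : ℕ) : NCSym :=
  ∑ᶠ γ ∈ {γ : SComp | IsSCompOf γ (seg r) ∧ 1 ∈ γ.headI},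
    ((-1 : ℚ) ^ (γ.length - 1)) • bas (applyComp γ A)

open TensorProduct in
/-- `Δ(A) = ∑_{K ⊔ L = [r]} std(A_K) ⊗ std(A_L)` on a basis element. -/
noncomputable def deltaB (A : Blocks) : NCSym ⊗[ℚ] NCSym :=
  ∑ K ∈ (seg A.card).powerset,
    bas (stdP (subColl A K)) ⊗ₜ[ℚ] bas (stdP (subColl A (seg A.card \ K)))

/-- The coproduct of `NCSym`, extended linearly. -/
noncomputable def Delta : NCSym →ₗ[ℚ] TensorProduct ℚ NCSym NCSym :=
  Finsupp.lsum ℚ fun A => LinearMap.toSpanSingleton ℚ _ (deltaB A)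

lemma ground_shiftP (A : Blocks) (k : ℕ) : ground (shiftP A k) = (ground A).image (· + k) := by
  ext x
  simp [ground, shiftP, Finset.mem_sup, Finset.mem_image]
  aesop

lemma image_Icc_add (n m : ℕ) : (Finset.Icc 1 n).image (· + m) = Finset.Icc (m+1) (m+n) := by
  ext x
  simp only [Finset.mem_image, Finset.mem_Icc]
  constructor
  · rintro ⟨y, hy, rfl⟩; omega
  · intro h; exact ⟨x - m, by omega, by omega⟩

lemma Icc_union_Icc (m n : ℕ) : Finset.Icc 1 m ∪ Finset.Icc (m+1) (m+n) = Finset.Icc 1 (m+n) := by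
  ext x; simp only [Finset.mem_union, Finset.mem_Icc]; omega

lemma shiftP_shiftP (A : Blocks) (k l : ℕ) : shiftP (shiftP A k) l = shiftP A (k + l) := by
  ext B
  simp only [shiftP, Finset.mem_image]
  constructor
  · rintro ⟨C, ⟨D, hD, rfl⟩, rfl⟩
    exact ⟨D, hD, by rw [Finset.image_image]; congr 1; funext x; simp; omega⟩
  · rintro ⟨D, hD, rfl⟩
    exact ⟨D.image (· + k), ⟨D, hD, rfl⟩, by rw [Finset.image_image]; congr 1; funext x; simp; omega⟩

lemma shiftP_union (A B : Blocks) (k : ℕ) : shiftP (A ∪ B) k = shiftP A k ∪ shiftP B k :=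
  Finset.image_union _ _

lemma ground_card_of_isSP {A : Blocks} {n : ℕ} (h : IsSP A n) : (ground A).card = n := by
  rw [h.2.2]; simp [seg]

lemma block_subset_ground {A : Blocks} {X : Finset ℕ} (h : X ∈ A) : X ⊆ ground A :=
  Finset.le_sup (f := id) h

/-- The concatenation of set partitions of `[m]` and `[n]` is a set partition of `[m+n]`. -/
lemma isSP_concat {A B : Blocks} {m n : ℕ} (hA : IsSP A m) (hB : IsSP B n) :
    IsSP (concatP A B) (m + n) := by
  obtain ⟨hAne, hAdisj, hAgr⟩ := hA
  obtain ⟨hBne, hBdisj, hBgr⟩ := hB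
  have hm : (ground A).card = m := by rw [hAgr]; simp [seg]
  have hshift : ground (shiftP B (ground A).card) = Finset.Icc (m+1) (m+n) := by
    rw [ground_shiftP, hBgr, hm]; exact image_Icc_add n m
  have hsubA : ∀ X ∈ A, X ⊆ Finset.Icc 1 m := by
    intro X hX
    have h := block_subset_ground hX
    rw [hAgr] at h
    simpa [seg] using h
  have hsubB : ∀ X ∈ shiftP B (ground A).card, X ⊆ Finset.Icc (m+1) (m+n) := by
    intro X hX; rw [← hshift]; exact block_subset_ground hX
  have hinj : Function.Injective (· + (ground A).card) := add_left_injective _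
  refine ⟨?_, ?_, ?_⟩
  · intro X hX
    rcases Finset.mem_union.mp hX with h | h
    · exact hAne X h
    · rcases Finset.mem_image.mp h with ⟨Y, hY, rfl⟩
      exact (hBne Y hY).image _
  · intro X hX Y hY hXY
    simp only [Finset.coe_union, Set.mem_union, Finset.mem_coe, concatP] at hX hY
    have mixed : ∀ U V : Finset ℕ, U ⊆ Finset.Icc 1 m → V ⊆ Finset.Icc (m+1) (m+n) →
        Disjoint (id U) (id V) := by
      intro U V hU hV
      simp only [id]
      rw [Finset.disjoint_left]
      intro a haU haV
      have h1 := Finset.mem_Icc.mp (hU haU)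
      have h2 := Finset.mem_Icc.mp (hV haV)
      omega
    rcases hX with hX | hX <;> rcases hY with hY | hY
    · exact hAdisj hX hY hXY
    · exact mixed X Y (hsubA X hX) (hsubB Y hY)
    · exact (mixed Y X (hsubA Y hY) (hsubB X hX)).symm
    · rcases Finset.mem_image.mp hX with ⟨X', hX', rfl⟩
      rcases Finset.mem_image.mp hY with ⟨Y', hY', rfl⟩
      have hne : X' ≠ Y' := by rintro rfl; exact hXY rfl
      have hd : Disjoint X' Y' := hBdisj (Finset.mem_coe.mpr hX') (Finset.mem_coe.mpr hY') hne
      exact (Finset.disjoint_image hinj).mpr hd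
  · show ground (A ∪ shiftP B (ground A).card) = seg (m + n)
    rw [ground, Finset.sup_union, ← ground, ← ground, hshift, hAgr]
    show seg m ∪ _ = seg (m+n)
    simpa [seg] using Icc_union_Icc m n

/-- `A` is a set partition of `[n]` for some `n`. -/
def IsSPart (A : Blocks) : Prop := ∃ n, IsSP A n

lemma isSPart_concat {A B : Blocks} (hA : IsSPart A) (hB : IsSPart B) :
    IsSPart (concatP A B) := by
  obtain ⟨m, hA⟩ := hA
  obtain ⟨n, hB⟩ := hB
  exact ⟨m + n, isSP_concat hA hB⟩

lemma isSPart_empty : IsSPart (∅ : Blocks) := by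
  refine ⟨0, ?_, ?_, ?_⟩ <;> simp [ground, seg]

/-- The type of set partitions of the sets `[n]`, `n ≥ 0`. -/
def SP : Type := {A : Blocks // IsSPart A}

/-- The monoid of set partitions under the concatenation product `A ⋅ B = A|B`,
with unit the empty set partition. -/
instance : Monoid SP where
  mul a b := ⟨concatP a.1 b.1, isSPart_concat a.2 b.2⟩
  one := ⟨∅, isSPart_empty⟩
  mul_assoc a b c := by
    refine Subtype.ext ?_
    show concatP (concatP a.1 b.1) c.1 = concatP a.1 (concatP b.1 c.1)
    obtain ⟨m, hA⟩ := a.2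
    obtain ⟨n, hB⟩ := b.2
    obtain ⟨p, hC⟩ := c.2
    have hm : (ground a.1).card = m := ground_card_of_isSP hA
    have hn : (ground b.1).card = n := ground_card_of_isSP hB
    have hmn : (ground (concatP a.1 b.1)).card = m + n := ground_card_of_isSP (isSP_concat hA hB)
    simp only [concatP] at hmn ⊢
    rw [hm] at hmn ⊢
    rw [hn, hmn, shiftP_union, shiftP_shiftP, Finset.union_assoc, Nat.add_comm n m]
  one_mul a := by
    refine Subtype.ext ?_
    show concatP ∅ a.1 = a.1
    have h0 : (ground (∅ : Blocks)).card = 0 := by simp [ground]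
    rw [concatP, h0]
    have h1 : shiftP a.1 0 = a.1 := by
      have himg : ∀ B : Finset ℕ, B.image (· + 0) = B := by intro B; simp
      simp [shiftP, himg]
    rw [h1]; exact Finset.empty_union _
  mul_one a := by
    refine Subtype.ext ?_
    show concatP a.1 ∅ = a.1
    simp [concatP, shiftP]

/-- `NCSym` as the monoid algebra on the monoid of set partitions. -/
abbrev NCSym2 := MonoidAlgebra ℚ SP

open scoped Classical in
/-- The basis element of `NCSym` indexed by a set partition (junk value `0` otherwise). -/
noncomputable def basSP (A : Blocks) : NCSym2 :=
  if h : IsSPart A then MonoidAlgebra.single (⟨A, h⟩ : SP) 1 else 0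

/-- `p(A) = ∑_{γ ∈ Γ'(r)} (-1)^{ℓ(γ)-1} γ[A]`, where `r = ℓ(A)`. -/
noncomputable def pSP (A : SP) : NCSym2 :=
  ∑ᶠ γ ∈ {γ : SComp | IsSCompOf γ (seg A.1.card) ∧ 1 ∈ γ.headI},
    ((-1 : ℚ) ^ (γ.length - 1)) • basSP (applyComp γ A.1)

/-- The type of atomic set partitions. -/
def AtomicSP : Type := {A : SP // ∃ n, IsAtomicSP A.1 n}
namespace NCSymProof

/-! ### Basic SP monoid lemmas -/

lemma SP.mul_def (x y : SP) : (x * y).1 = concatP x.1 y.1 := rfl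

lemma SP.one_def : (1 : SP).1 = (∅ : Blocks) := rfl

def mkSP (A : Blocks) (h : IsSPart A) : SP := ⟨A, h⟩

lemma mkSP_val (A : Blocks) (h : IsSPart A) : (mkSP A h).1 = A := rfl

lemma mkSP_mul (A B : Blocks) (hA : IsSPart A) (hB : IsSPart B) :
    mkSP A hA * mkSP B hB = mkSP (concatP A B) (isSPart_concat hA hB) := rfl

/-- weight of a set partition -/
def wt (x : SP) : ℕ := (ground x.1).card

lemma wt_spec (x : SP) : IsSP x.1 (wt x) := by
  obtain ⟨n, hn⟩ := x.2
  have := ground_card_of_isSP hn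
  rwa [show wt x = n from this]

lemma wt_mul (x y : SP) : wt (x * y) = wt x + wt y := by
  have h := isSP_concat (wt_spec x) (wt_spec y)
  have : IsSP (x * y).1 (wt x + wt y) := h
  exact ground_card_of_isSP this

lemma isSP_unique {A : Blocks} {m n : ℕ} (hm : IsSP A m) (hn : IsSP A n) : m = n := by
  have h1 := ground_card_of_isSP hm
  have h2 := ground_card_of_isSP hn
  omega

lemma wt_eq_of_isSP {x : SP} {n : ℕ} (h : IsSP x.1 n) : wt x = n :=
  isSP_unique (wt_spec x) h

lemma seg_zero : seg 0 = ∅ := by simp [seg]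

lemma isSP_zero_iff {A : Blocks} (h : IsSP A 0) : A = ∅ := by
  obtain ⟨hne, _, hg⟩ := h
  rw [seg_zero] at hg
  by_contra hA
  obtain ⟨B, hB⟩ := Finset.nonempty_iff_ne_empty.mpr hA
  obtain ⟨b, hb⟩ := hne B hB
  have : b ∈ ground A := block_subset_ground hB hb
  rw [hg] at this
  exact absurd this (Finset.notMem_empty b)

lemma wt_eq_zero_iff {x : SP} : wt x = 0 ↔ x = 1 := by
  constructor
  · intro h
    have : IsSP x.1 0 := by rw [← h]; exact wt_spec x
    exact Subtype.ext (isSP_zero_iff this)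
  · rintro rfl
    simp [wt, SP.one_def, ground]

end NCSymProof
namespace NCSymProof

/-! ### Splitting theory -/

def SplitsAt (A : Blocks) (m : ℕ) : Prop :=
  ∀ X ∈ A, X ⊆ seg m ∨ ∀ x ∈ X, m < x

lemma mem_shiftP_gt {C : Blocks} {n : ℕ} (hC : IsSP C n) {m : ℕ} {X : Finset ℕ}
    (hX : X ∈ shiftP C m) : ∀ x ∈ X, m < x := by
  rcases Finset.mem_image.mp hX with ⟨Y, hY, rfl⟩
  intro x hx
  rcases Finset.mem_image.mp hx with ⟨y, hy, rfl⟩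
  have : y ∈ ground C := block_subset_ground hY hy
  rw [hC.2.2] at this
  have := (Finset.mem_Icc.mp this).1
  omega

lemma block_sub_seg {B : Blocks} {m : ℕ} (hB : IsSP B m) {X : Finset ℕ} (hX : X ∈ B) :
    X ⊆ seg m := by
  have := block_subset_ground hX
  rwa [hB.2.2] at this

lemma splitsAt_concat {B C : Blocks} {m n : ℕ} (hB : IsSP B m) (hC : IsSP C n) :
    SplitsAt (concatP B C) m := by
  intro X hX
  rcases Finset.mem_union.mp hX with h | h
  · exact Or.inl (block_sub_seg hB h)
  · have hm : (ground B).card = m := ground_card_of_isSP hB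
    rw [hm] at h
    exact Or.inr (mem_shiftP_gt hC h)

lemma filter_concat_left {B C : Blocks} {m n : ℕ} (hB : IsSP B m) (hC : IsSP C n) :
    (concatP B C).filter (· ⊆ seg m) = B := by
  have hm : (ground B).card = m := ground_card_of_isSP hB
  ext X
  simp only [Finset.mem_filter, concatP, Finset.mem_union, hm]
  constructor
  · rintro ⟨h | h, hsub⟩
    · exact h
    · exfalso
      rcases Finset.mem_image.mp h with ⟨Y, hY, rfl⟩
      obtain ⟨y, hy⟩ := (hC.1 Y hY).image (· + m)
      have h1 := mem_shiftP_gt hC (m := m) (Finset.mem_image_of_mem _ hY) y hy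
      have h2 := (Finset.mem_Icc.mp (hsub hy)).2
      omega
  · intro h
    exact ⟨Or.inl h, block_sub_seg hB h⟩

lemma filter_concat_right {B C : Blocks} {m n : ℕ} (hB : IsSP B m) (hC : IsSP C n) :
    (concatP B C).filter (fun X => ¬ X ⊆ seg m) = shiftP C m := by
  have hm : (ground B).card = m := ground_card_of_isSP hB
  ext X
  simp only [Finset.mem_filter, concatP, Finset.mem_union, hm]
  constructor
  · rintro ⟨h | h, hsub⟩
    · exact absurd (block_sub_seg hB h) hsub
    · exact h
  · intro h
    refine ⟨Or.inr h, fun hsub => ?_⟩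
    obtain ⟨Y, hY, rfl⟩ := Finset.mem_image.mp h
    obtain ⟨y, hy⟩ := (hC.1 Y hY).image (· + m)
    have h1 := mem_shiftP_gt hC (m := m) h y hy
    have h2 := (Finset.mem_Icc.mp (hsub hy)).2
    omega

lemma shiftP_injective (m : ℕ) : Function.Injective (fun C => shiftP C m) := by
  intro C C' h
  have hinj : Function.Injective (fun X : Finset ℕ => X.image (· + m)) :=
    Finset.image_injective (add_left_injective m)
  exact Finset.image_injective hinj h

lemma concat_cancel {B B' C C' : Blocks} {m n n' : ℕ} (hB : IsSP B m) (hB' : IsSP B' m)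
    (hC : IsSP C n) (hC' : IsSP C' n') (h : concatP B C = concatP B' C') :
    B = B' ∧ C = C' := by
  have h1 : B = B' := by
    rw [← filter_concat_left hB hC, ← filter_concat_left hB' hC', h]
  have h2 : shiftP C m = shiftP C' m := by
    rw [← filter_concat_right hB hC, ← filter_concat_right hB' hC', h]
  exact ⟨h1, shiftP_injective m h2⟩

def unshiftP (A : Blocks) (m : ℕ) : Blocks := A.image fun X => X.image (· - m)

/-- decomposition at a split point -/
lemma split_decomp {A : Blocks} {n m : ℕ} (hA : IsSP A n) (hm : m ≤ n)
    (hs : SplitsAt A m) :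
    IsSP (A.filter (· ⊆ seg m)) m ∧
    IsSP (unshiftP (A.filter (fun X => ¬ X ⊆ seg m)) m) (n - m) ∧
    A = concatP (A.filter (· ⊆ seg m)) (unshiftP (A.filter (fun X => ¬ X ⊆ seg m)) m) := by
  obtain ⟨hne, hdis, hg⟩ := hA
  set B := A.filter (· ⊆ seg m) with hBdef
  set R := A.filter (fun X => ¬ X ⊆ seg m) with hRdef
  have hRgt : ∀ X ∈ R, ∀ x ∈ X, m < x := by
    intro X hX x hx
    rw [hRdef, Finset.mem_filter] at hX
    rcases hs X hX.1 with h | h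
    · exact absurd h hX.2
    · exact h x hx
  have hRle : ∀ X ∈ R, ∀ x ∈ X, x ≤ n := by
    intro X hX x hx
    have : x ∈ ground A := block_subset_ground (Finset.mem_of_mem_filter X hX) hx
    rw [hg] at this
    exact (Finset.mem_Icc.mp this).2
  have hBsp : IsSP B m := by
    refine ⟨fun X hX => hne X (Finset.mem_of_mem_filter X hX), ?_, ?_⟩
    · exact hdis.subset (Finset.coe_subset.mpr (Finset.filter_subset _ _))
    · apply Finset.Subset.antisymm
      · intro x hx
        rw [ground, Finset.mem_sup] at hx
        obtain ⟨X, hX, hxX⟩ := hx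
        exact (Finset.mem_filter.mp hX).2 hxX
      · intro x hx
        have hx' : x ∈ ground A := by
          rw [hg]
          have := Finset.mem_Icc.mp hx
          exact Finset.mem_Icc.mpr ⟨this.1, this.2.trans hm⟩
        rw [ground, Finset.mem_sup] at hx'
        obtain ⟨X, hX, hxX⟩ := hx'
        have hXB : X ∈ B := by
          rw [hBdef, Finset.mem_filter]
          refine ⟨hX, ?_⟩
          rcases hs X hX with h | h
          · exact h
          · exact absurd (Finset.mem_Icc.mp hx).2 (by have := h x hxX; omega)
        rw [ground, Finset.mem_sup]
        exact ⟨X, hXB, hxX⟩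
  have hCsp : IsSP (unshiftP R m) (n - m) := by
    refine ⟨?_, ?_, ?_⟩
    · intro X hX
      rcases Finset.mem_image.mp hX with ⟨Y, hY, rfl⟩
      exact (hne Y (Finset.mem_of_mem_filter Y hY)).image _
    · intro X hX Y hY hXY
      rcases Finset.mem_image.mp (Finset.mem_coe.mp hX) with ⟨X', hX', rfl⟩
      rcases Finset.mem_image.mp (Finset.mem_coe.mp hY) with ⟨Y', hY', rfl⟩
      have hne' : X' ≠ Y' := by rintro rfl; exact hXY rfl
      have hd : Disjoint X' Y' :=
        hdis (Finset.mem_coe.mpr (Finset.mem_of_mem_filter X' hX'))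
          (Finset.mem_coe.mpr (Finset.mem_of_mem_filter Y' hY')) hne'
      show Disjoint (id _) (id _)
      simp only [id_eq]
      rw [Finset.disjoint_left]
      intro a ha hb
      rcases Finset.mem_image.mp ha with ⟨x, hx, rfl⟩
      rcases Finset.mem_image.mp hb with ⟨y, hy, hxy⟩
      have h1 := hRgt X' hX' x hx
      have h2 := hRgt Y' hY' y hy
      have : x = y := by omega
      subst this
      exact (Finset.disjoint_left.mp hd hx) hy
    · apply Finset.Subset.antisymm
      · intro z hz
        rw [ground, Finset.mem_sup] at hz
        obtain ⟨X, hX, hzX⟩ := hz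
        rcases Finset.mem_image.mp hX with ⟨Y, hY, rfl⟩
        rcases Finset.mem_image.mp hzX with ⟨x, hx, rfl⟩
        have h1 := hRgt Y hY x hx
        have h2 := hRle Y hY x hx
        simp only [seg, Finset.mem_Icc]
        omega
      · intro z hz
        have hz' := Finset.mem_Icc.mp hz
        have hzm : z + m ∈ ground A := by
          rw [hg]; simp only [seg, Finset.mem_Icc]; omega
        rw [ground, Finset.mem_sup] at hzm
        obtain ⟨X, hX, hxX⟩ := hzm
        have hXR : X ∈ R := by
          rw [hRdef, Finset.mem_filter]
          refine ⟨hX, fun hsub => ?_⟩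
          have := (Finset.mem_Icc.mp (hsub hxX)).2
          omega
        rw [ground, Finset.mem_sup]
        refine ⟨X.image (· - m), Finset.mem_image_of_mem _ hXR, ?_⟩
        refine Finset.mem_image.mpr ⟨z + m, hxX, by omega⟩
  refine ⟨hBsp, hCsp, ?_⟩
  have hm' : (ground B).card = m := ground_card_of_isSP hBsp
  show A = B ∪ shiftP (unshiftP R m) (ground B).card
  rw [hm']
  have hshift : shiftP (unshiftP R m) m = R := by
    rw [shiftP, unshiftP, Finset.image_image]
    have : ∀ X ∈ R, (X.image (· - m)).image (· + m) = X := by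
      intro X hX
      rw [Finset.image_image]
      have : ∀ x ∈ X, x - m + m = x := fun x hx => by have := hRgt X hX x hx; omega
      calc X.image (fun x => x - m + m) = X.image id := Finset.image_congr this
        _ = X := Finset.image_id
    calc R.image ((fun X : Finset ℕ => X.image (· + m)) ∘ fun X => X.image (· - m))
        = R.image id := Finset.image_congr (fun X hX => this X hX)
      _ = R := Finset.image_id
  rw [hshift, hBdef, hRdef]
  exact (Finset.filter_union_filter_not_eq (fun X => X ⊆ seg m) A).symm

/-- atomicity in terms of split points -/
lemma isAtomic_iff {A : Blocks} {n : ℕ} :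
    IsAtomicSP A n ↔ IsSP A n ∧ 1 ≤ n ∧ ∀ m, 0 < m → m < n → ¬ SplitsAt A m := by
  constructor
  · rintro ⟨hA, hn, hdec⟩
    refine ⟨hA, hn, fun m hm0 hmn hs => hdec ?_⟩
    obtain ⟨h1, h2, h3⟩ := split_decomp hA (le_of_lt hmn) hs
    exact ⟨m, _, _, hm0, hmn, h1, h2, h3⟩
  · rintro ⟨hA, hn, hns⟩
    refine ⟨hA, hn, ?_⟩
    rintro ⟨m, B, C, hm0, hmn, hB, hC, rfl⟩
    exact hns m hm0 hmn (splitsAt_concat hB hC)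

end NCSymProof
namespace NCSymProof

/-! ### The free monoid structure on SP -/

noncomputable def mu : FreeMonoid AtomicSP →* SP := FreeMonoid.lift (fun a => a.1)

lemma atomic_wt {a : AtomicSP} : IsAtomicSP a.1.1 (wt a.1) := by
  obtain ⟨n, hn⟩ := a.2
  rwa [wt_eq_of_isSP hn.1]

lemma atomic_wt_pos (a : AtomicSP) : 1 ≤ wt a.1 := atomic_wt.2.1

lemma mu_cons (a : AtomicSP) (t : List AtomicSP) :
    mu (FreeMonoid.ofList (a :: t)) = a.1 * mu (FreeMonoid.ofList t) := by
  have : FreeMonoid.ofList (a :: t) = FreeMonoid.of a * FreeMonoid.ofList t := rfl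
  rw [this, map_mul, mu, FreeMonoid.lift_eval_of]

lemma mu_nil : mu (FreeMonoid.ofList ([] : List AtomicSP)) = 1 := map_one mu

lemma wt_mu_ofList (l : List AtomicSP) : wt (mu (FreeMonoid.ofList l)) = (l.map (fun a => wt a.1)).sum := by
  induction l with
  | nil => rw [mu_nil]; simpa using wt_eq_zero_iff.mpr rfl
  | cons a t ih => rw [mu_cons, wt_mul, ih]; simp

lemma length_le_wt_mu (l : List AtomicSP) : l.length ≤ wt (mu (FreeMonoid.ofList l)) := by
  rw [wt_mu_ofList]
  induction l with
  | nil => simp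
  | cons a t ih =>
    simp only [List.map_cons, List.sum_cons, List.length_cons]
    have := atomic_wt_pos a
    omega

/-- existence of atomic factorizations -/
lemma mu_surj_aux : ∀ n : ℕ, ∀ A : Blocks, IsSP A n → ∃ w : FreeMonoid AtomicSP, (mu w).1 = A := by
  intro n
  induction n using Nat.strong_induction_on with
  | _ n ih =>
    intro A hA
    rcases Nat.eq_zero_or_pos n with rfl | hn
    · exact ⟨FreeMonoid.ofList [], by rw [mu_nil, SP.one_def, isSP_zero_iff hA]⟩
    by_cases hat : ∀ m, 0 < m → m < n → ¬ SplitsAt A m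
    · have hatom : IsAtomicSP A n := isAtomic_iff.mpr ⟨hA, hn, hat⟩
      refine ⟨FreeMonoid.ofList [⟨⟨A, n, hA⟩, n, hatom⟩], ?_⟩
      rw [show ([⟨⟨A, n, hA⟩, n, hatom⟩] : List AtomicSP) = [⟨⟨A, n, hA⟩, n, hatom⟩] from rfl]
      have hmc := mu_cons ⟨⟨A, n, hA⟩, n, hatom⟩ []
      rw [mu_nil, mul_one] at hmc
      exact congrArg Subtype.val hmc
    · push_neg at hat
      obtain ⟨m, hm0, hmn, hs⟩ := hat
      obtain ⟨hB, hC, hBC⟩ := split_decomp hA (le_of_lt hmn) hs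
      obtain ⟨w₁, hw₁⟩ := ih m hmn _ hB
      obtain ⟨w₂, hw₂⟩ := ih (n - m) (by omega) _ hC
      refine ⟨w₁ * w₂, ?_⟩
      rw [map_mul, SP.mul_def, hw₁, hw₂, ← hBC]

lemma mu_surjective : Function.Surjective mu := by
  intro b
  obtain ⟨n, hn⟩ := b.2
  obtain ⟨w, hw⟩ := mu_surj_aux n b.1 hn
  exact ⟨w, Subtype.ext hw⟩

lemma atomic_head_not_lt {A A' C C' : Blocks} {m m' : ℕ}
    (hA : IsAtomicSP A m) (hA' : IsAtomicSP A' m')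
    {nc nc' : ℕ} (hC : IsSP C nc) (hC' : IsSP C' nc')
    (h : concatP A C = concatP A' C') : ¬ m < m' := by
  intro hlt
  have hm0 : 0 < m := hA.2.1
  have hs : SplitsAt A' m := by
    intro X hX
    have hX' : X ∈ concatP A' C' := Finset.mem_union_left _ hX
    rw [← h] at hX'
    rcases Finset.mem_union.mp hX' with h1 | h1
    · exact Or.inl (block_sub_seg hA.1 h1)
    · have hmA : (ground A).card = m := ground_card_of_isSP hA.1
      rw [hmA] at h1
      exact Or.inr (mem_shiftP_gt hC h1)
  exact (isAtomic_iff.mp hA').2.2 m hm0 hlt hs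

lemma mu_inj_aux : ∀ (l l' : List AtomicSP),
    mu (FreeMonoid.ofList l) = mu (FreeMonoid.ofList l') → l = l' := by
  intro l
  induction l with
  | nil =>
    intro l' h
    cases l' with
    | nil => rfl
    | cons a t =>
      exfalso
      have h0 : wt (mu (FreeMonoid.ofList ([] : List AtomicSP))) = 0 := by
        rw [mu_nil]; exact wt_eq_zero_iff.mpr rfl
      have h1 := length_le_wt_mu (a :: t)
      rw [← h, h0] at h1
      simp at h1
  | cons a t ih =>
    intro l' h
    cases l' with
    | nil =>
      exfalso
      have h0 : wt (mu (FreeMonoid.ofList ([] : List AtomicSP))) = 0 := by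
        rw [mu_nil]; exact wt_eq_zero_iff.mpr rfl
      have h1 := length_le_wt_mu (a :: t)
      rw [h, h0] at h1
      simp at h1
    | cons a' t' =>
      rw [mu_cons, mu_cons] at h
      have hblocks : concatP a.1.1 (mu (FreeMonoid.ofList t)).1
          = concatP a'.1.1 (mu (FreeMonoid.ofList t')).1 := by
        have := congrArg Subtype.val h
        simpa [SP.mul_def] using this
      have hCt := wt_spec (mu (FreeMonoid.ofList t))
      have hCt' := wt_spec (mu (FreeMonoid.ofList t'))
      have hne1 := atomic_head_not_lt atomic_wt atomic_wt hCt hCt' hblocks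
      have hne2 := atomic_head_not_lt atomic_wt atomic_wt hCt' hCt hblocks.symm
      have hmm : wt a.1 = wt a'.1 := by omega
      have hcan := concat_cancel atomic_wt.1 (hmm ▸ atomic_wt.1) hCt hCt' hblocks
      have haa : a = a' := Subtype.ext (Subtype.ext hcan.1)
      have htt : t = t' := ih t' (Subtype.ext hcan.2)
      rw [haa, htt]

lemma mu_injective : Function.Injective mu := by
  intro w w' h
  have := mu_inj_aux (FreeMonoid.toList w) (FreeMonoid.toList w') (by
    simpa [FreeMonoid.ofList_toList] using h)
  calc w = FreeMonoid.ofList (FreeMonoid.toList w) := rfl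
    _ = FreeMonoid.ofList (FreeMonoid.toList w') := by rw [this]
    _ = w' := rfl

lemma mu_bijective : Function.Bijective mu := ⟨mu_injective, mu_surjective⟩

/-- number of atomic factors -/
noncomputable def nu (A : SP) : ℕ :=
  FreeMonoid.length ((Equiv.ofBijective mu mu_bijective).symm A)

lemma nu_mu (w : FreeMonoid AtomicSP) : nu (mu w) = FreeMonoid.length w := by
  unfold nu
  rw [show (Equiv.ofBijective mu mu_bijective).symm (mu w) = w from
    (Equiv.ofBijective mu mu_bijective).symm_apply_apply w]

lemma nu_mul (A B : SP) : nu (A * B) = nu A + nu B := by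
  obtain ⟨w, rfl⟩ := mu_surjective A
  obtain ⟨w', rfl⟩ := mu_surjective B
  rw [← map_mul, nu_mu, nu_mu, nu_mu, FreeMonoid.length_mul]

lemma nu_one : nu 1 = 0 := by
  have : mu 1 = 1 := map_one mu
  rw [← this, nu_mu]
  rfl

lemma nu_le_wt (A : SP) : nu A ≤ wt A := by
  obtain ⟨w, rfl⟩ := mu_surjective A
  rw [nu_mu]
  have := length_le_wt_mu (FreeMonoid.toList w)
  simpa [FreeMonoid.ofList_toList, FreeMonoid.length] using this

lemma nu_pos_of_ne_one {A : SP} (h : A ≠ 1) : 1 ≤ nu A := by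
  by_contra hc
  push_neg at hc
  interval_cases h' : nu A
  obtain ⟨w, rfl⟩ := mu_surjective A
  rw [nu_mu] at h'
  have : w = 1 := by
    have : FreeMonoid.toList w = [] := List.length_eq_zero_iff.mp h'
    calc w = FreeMonoid.ofList (FreeMonoid.toList w) := rfl
      _ = 1 := by rw [this]; rfl
  exact h (by rw [this, map_one])

end NCSymProof
namespace NCSymProof

/-! ### Standardization -/

lemma stdFun_mem {X : Finset ℕ} {x : ℕ} (hx : x ∈ X) : stdFun X x ∈ seg X.card := by
  unfold stdFun seg
  have h1 : X.filter (· < x) ⊆ X.erase x := by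
    intro y hy
    rw [Finset.mem_filter] at hy
    exact Finset.mem_erase.mpr ⟨Nat.ne_of_lt hy.2, hy.1⟩
  have h2 := Finset.card_le_card h1
  have h3 := Finset.card_erase_of_mem hx
  have h4 : 1 ≤ X.card := Finset.card_pos.mpr ⟨x, hx⟩
  rw [Finset.mem_Icc]
  omega

lemma stdFun_strictMono {X : Finset ℕ} {x y : ℕ} (hx : x ∈ X) (hxy : x < y) :
    stdFun X x < stdFun X y := by
  unfold stdFun
  have hsub : X.filter (· < x) ⊆ X.filter (· < y) := by
    intro z hz
    rw [Finset.mem_filter] at hz ⊢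
    exact ⟨hz.1, by omega⟩
  have hss : X.filter (· < x) ⊂ X.filter (· < y) := by
    rw [Finset.ssubset_def]
    refine ⟨hsub, fun hc => ?_⟩
    have := (Finset.mem_filter.mp (hc (Finset.mem_filter.mpr ⟨hx, hxy⟩))).2
    omega
  have := Finset.card_lt_card hss
  omega

lemma stdFun_injOn {X : Finset ℕ} : ∀ x ∈ X, ∀ y ∈ X, stdFun X x = stdFun X y → x = y := by
  intro x hx y hy h
  rcases lt_trichotomy x y with hc | hc | hc
  · exact absurd h (Nat.ne_of_lt (stdFun_strictMono hx hc))
  · exact hc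
  · exact absurd h.symm (Nat.ne_of_lt (stdFun_strictMono hy hc))

lemma stdFun_image (X : Finset ℕ) : X.image (stdFun X) = seg X.card := by
  apply Finset.eq_of_subset_of_card_le
  · intro z hz
    rcases Finset.mem_image.mp hz with ⟨x, hx, rfl⟩
    exact stdFun_mem hx
  · rw [Finset.card_image_of_injOn (fun x hx y hy => stdFun_injOn x hx y hy)]
    simp [seg]

/-- a sub-collection of a partition is a partition of its ground set -/
lemma isPartitionOf_subset {A S : Blocks} {X : Finset ℕ} (hA : IsPartitionOf A X)
    (hS : S ⊆ A) : IsPartitionOf S (ground S) :=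
  ⟨fun B hB => hA.1 B (hS hB), hA.2.1.subset (Finset.coe_subset.mpr hS), rfl⟩

lemma stdP_isSP {A : Blocks} {X : Finset ℕ} (hA : IsPartitionOf A X) :
    IsSP (stdP A) X.card := by
  obtain ⟨hne, hdis, hg⟩ := hA
  subst hg
  refine ⟨?_, ?_, ?_⟩
  · intro B hB
    rcases Finset.mem_image.mp hB with ⟨C, hC, rfl⟩
    exact (hne C hC).image _
  · intro B hB C hC hBC
    rcases Finset.mem_image.mp (Finset.mem_coe.mp hB) with ⟨B', hB', rfl⟩
    rcases Finset.mem_image.mp (Finset.mem_coe.mp hC) with ⟨C', hC', rfl⟩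
    have hne' : B' ≠ C' := by rintro rfl; exact hBC rfl
    have hd : Disjoint B' C' := hdis (Finset.mem_coe.mpr hB') (Finset.mem_coe.mpr hC') hne'
    show Disjoint (id _) (id _)
    simp only [id_eq]
    rw [Finset.disjoint_left]
    intro a ha hb
    rcases Finset.mem_image.mp ha with ⟨x, hx, rfl⟩
    rcases Finset.mem_image.mp hb with ⟨y, hy, hxy⟩
    have hxg : x ∈ ground A := block_subset_ground hB' hx
    have hyg : y ∈ ground A := block_subset_ground hC' hy
    have : y = x := stdFun_injOn y hyg x hxg hxy
    subst this
    exact (Finset.disjoint_left.mp hd hx) hy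
  · rw [← stdFun_image (ground A)]
    ext z
    simp only [ground, Finset.mem_sup, stdP, Finset.mem_image, id]
    constructor
    · rintro ⟨B, ⟨C, hC, rfl⟩, hz⟩
      rcases Finset.mem_image.mp hz with ⟨x, hx, rfl⟩
      exact ⟨x, ⟨C, hC, hx⟩, rfl⟩
    · rintro ⟨x, hx, rfl⟩
      rcases hx with ⟨C, hC, hxC⟩
      exact ⟨C.image (stdFun (A.sup id)), ⟨C, hC, rfl⟩, Finset.mem_image_of_mem _ hxC⟩

lemma stdFun_seg {n x : ℕ} (hx : x ∈ seg n) : stdFun (seg n) x = x := by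
  have hx' := Finset.mem_Icc.mp (by simpa [seg] using hx)
  unfold stdFun
  have h : (seg n).filter (· < x) = Finset.Icc 1 (x - 1) := by
    ext y
    simp only [seg, Finset.mem_filter, Finset.mem_Icc]
    omega
  rw [h, Nat.card_Icc]
  omega

lemma stdP_id {A : Blocks} {n : ℕ} (hA : IsSP A n) : stdP A = A := by
  unfold stdP
  have hg : ground A = seg n := hA.2.2
  rw [hg]
  have : ∀ B ∈ A, B.image (stdFun (seg n)) = B := by
    intro B hB
    have hsub : B ⊆ seg n := block_sub_seg hA hB
    calc B.image (stdFun (seg n)) = B.image id := Finset.image_congr (fun x hx => stdFun_seg (hsub hx))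
      _ = B := Finset.image_id
  calc A.image (fun B => B.image (stdFun (seg n))) = A.image id := Finset.image_congr this
    _ = A := Finset.image_id

/-! ### blockAt and subColl -/

/-- distinct blocks of a partition have distinct minima -/
lemma min_injOn {A : Blocks} {X : Finset ℕ} (hA : IsPartitionOf A X) :
    ∀ B ∈ A, ∀ C ∈ A, B.min = C.min → B = C := by
  intro B hB C hC h
  by_contra hne
  obtain ⟨b, hb⟩ := Finset.min_of_nonempty (hA.1 B hB)
  have hbB : b ∈ B := Finset.mem_of_min hb
  have hbC : b ∈ C := Finset.mem_of_min (h ▸ hb)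
  exact (Finset.disjoint_left.mp (hA.2.1 (Finset.mem_coe.mpr hB) (Finset.mem_coe.mpr hC) hne) hbB) hbC

def rk (A : Blocks) (B : Finset ℕ) : ℕ := (A.filter fun C => C.min ≤ B.min).card

lemma rk_strictMono {A : Blocks} {B C : Finset ℕ} (hC : C ∈ A)
    (h : B.min < C.min) : rk A B < rk A C := by
  apply Finset.card_lt_card
  have hsub : (A.filter fun D => D.min ≤ B.min) ⊆ (A.filter fun D => D.min ≤ C.min) := by
    intro D hD
    rw [Finset.mem_filter] at hD ⊢
    exact ⟨hD.1, le_trans hD.2 (le_of_lt h)⟩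
  rw [Finset.ssubset_def]
  refine ⟨hsub, fun hc => ?_⟩
  have := (Finset.mem_filter.mp (hc (Finset.mem_filter.mpr ⟨hC, le_refl _⟩))).2
  exact absurd h (not_lt.mpr this)

lemma rk_injOn {A : Blocks} {X : Finset ℕ} (hA : IsPartitionOf A X) :
    ∀ B ∈ A, ∀ C ∈ A, rk A B = rk A C → B = C := by
  intro B hB C hC h
  rcases lt_trichotomy B.min C.min with hc | hc | hc
  · exact absurd h (Nat.ne_of_lt (rk_strictMono hC hc))
  · exact min_injOn hA B hB C hC hc
  · exact absurd h.symm (Nat.ne_of_lt (rk_strictMono hB hc))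

lemma rk_mem_seg {A : Blocks} {B : Finset ℕ} (hB : B ∈ A) : rk A B ∈ seg A.card := by
  simp only [seg, Finset.mem_Icc]
  constructor
  · exact Finset.card_pos.mpr ⟨B, Finset.mem_filter.mpr ⟨hB, le_refl _⟩⟩
  · exact Finset.card_le_card (Finset.filter_subset _ _)

lemma rk_image {A : Blocks} {X : Finset ℕ} (hA : IsPartitionOf A X) :
    A.image (rk A) = seg A.card := by
  apply Finset.eq_of_subset_of_card_le
  · intro z hz
    rcases Finset.mem_image.mp hz with ⟨B, hB, rfl⟩
    exact rk_mem_seg hB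
  · rw [Finset.card_image_of_injOn (fun B hB C hC => rk_injOn hA B hB C hC)]
    simp [seg]

lemma blockAt_spec {A : Blocks} {X : Finset ℕ} (hA : IsPartitionOf A X) {i : ℕ}
    (hi : i ∈ seg A.card) : blockAt A i ∈ A ∧ rk A (blockAt A i) = i := by
  rw [← rk_image hA] at hi
  rcases Finset.mem_image.mp hi with ⟨B₀, hB₀, hrk⟩
  have hfilter : (A.filter fun B => (A.filter fun C => C.min ≤ B.min).card = i) = {B₀} := by
    ext B
    simp only [Finset.mem_filter, Finset.mem_singleton]
    constructor
    · rintro ⟨hB, hrkB⟩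
      exact rk_injOn hA B hB B₀ hB₀ (by rw [hrk]; exact hrkB)
    · rintro rfl
      exact ⟨hB₀, hrk⟩
  have : blockAt A i = B₀ := by
    rw [blockAt, hfilter, Finset.sup_singleton]; rfl
  rw [this]
  exact ⟨hB₀, hrk⟩

lemma blockAt_rk {A : Blocks} {X : Finset ℕ} (hA : IsPartitionOf A X) {B : Finset ℕ}
    (hB : B ∈ A) : blockAt A (rk A B) = B := by
  obtain ⟨hmem, hr⟩ := blockAt_spec hA (rk_mem_seg hB)
  exact rk_injOn hA _ hmem B hB hr

lemma blockAt_image {A : Blocks} {X : Finset ℕ} (hA : IsPartitionOf A X) :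
    (seg A.card).image (blockAt A) = A := by
  ext B
  constructor
  · intro hB
    rcases Finset.mem_image.mp hB with ⟨i, hi, rfl⟩
    exact (blockAt_spec hA hi).1
  · intro hB
    exact Finset.mem_image.mpr ⟨rk A B, rk_mem_seg hB, blockAt_rk hA hB⟩

lemma blockAt_injOn {A : Blocks} {X : Finset ℕ} (hA : IsPartitionOf A X) :
    ∀ i ∈ seg A.card, ∀ j ∈ seg A.card, blockAt A i = blockAt A j → i = j := by
  intro i hi j hj h
  have h1 := (blockAt_spec hA hi).2
  have h2 := (blockAt_spec hA hj).2
  rw [← h1, ← h2, h]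

lemma subColl_full {A : Blocks} {X : Finset ℕ} (hA : IsPartitionOf A X) :
    subColl A (seg A.card) = A := blockAt_image hA

lemma subColl_subset {A : Blocks} {X : Finset ℕ} (hA : IsPartitionOf A X) {g : Finset ℕ}
    (hg : g ⊆ seg A.card) : subColl A g ⊆ A := by
  intro B hB
  rcases Finset.mem_image.mp hB with ⟨i, hi, rfl⟩
  exact (blockAt_spec hA (hg hi)).1

lemma isPartitionOf_subColl {A : Blocks} {X : Finset ℕ} (hA : IsPartitionOf A X) {g : Finset ℕ}
    (hg : g ⊆ seg A.card) : IsPartitionOf (subColl A g) (ground (subColl A g)) :=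
  isPartitionOf_subset hA (subColl_subset hA hg)

lemma ground_card_subColl {A : Blocks} {X : Finset ℕ} (hA : IsPartitionOf A X) {g : Finset ℕ}
    (hg : g ⊆ seg A.card) : (ground (subColl A g)).card = ∑ i ∈ g, (blockAt A i).card := by
  have hpart := isPartitionOf_subColl hA hg
  have h1 : ground (subColl A g) = (subColl A g).biUnion id := by
    rw [ground, Finset.sup_eq_biUnion]
  rw [h1, Finset.card_biUnion (fun B hB C hC hBC => hpart.2.1 (Finset.mem_coe.mpr hB) (Finset.mem_coe.mpr hC) hBC)]
  rw [subColl, Finset.sum_image (fun i hi j hj h => blockAt_injOn hA i (hg hi) j (hg hj) h)]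
  simp

end NCSymProof
namespace NCSymProof

/-! ### applyComp properties -/

lemma concatP_empty (A : Blocks) : concatP A ∅ = A := by simp [concatP, shiftP]

lemma isSP_empty : IsSP (∅ : Blocks) 0 := by
  refine ⟨?_, ?_, ?_⟩ <;> simp [ground, seg]

lemma subset_sunion {γ : SComp} {g : Finset ℕ} (hg : g ∈ γ) : g ⊆ sunion γ := by
  induction γ with
  | nil => simp at hg
  | cons a l ih =>
    rcases List.mem_cons.mp hg with rfl | h
    · exact Finset.subset_union_left
    · exact (ih h).trans Finset.subset_union_right

lemma applyComp_cons (g : Finset ℕ) (γ : SComp) (A : Blocks) :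
    applyComp (g :: γ) A = concatP (stdP (subColl A g)) (applyComp γ A) := rfl

lemma applyComp_nil (A : Blocks) : applyComp [] A = ∅ := rfl

lemma ground_subColl_pos {A : Blocks} {X : Finset ℕ} (hA : IsPartitionOf A X) {g : Finset ℕ}
    (hg : g ⊆ seg A.card) (hne : g.Nonempty) : 1 ≤ (ground (subColl A g)).card := by
  obtain ⟨i, hi⟩ := hne
  have hB : blockAt A i ∈ subColl A g := Finset.mem_image_of_mem _ hi
  have hBA : blockAt A i ∈ A := (blockAt_spec hA (hg hi)).1
  obtain ⟨b, hb⟩ := hA.1 _ hBA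
  have : b ∈ ground (subColl A g) := block_subset_ground hB hb
  exact Finset.card_pos.mpr ⟨b, this⟩

lemma applyComp_spec {A : Blocks} {X : Finset ℕ} (hA : IsPartitionOf A X) :
    ∀ γ : SComp, (∀ g ∈ γ, g.Nonempty) → (∀ g ∈ γ, g ⊆ seg A.card) →
    IsSP (applyComp γ A) ((γ.map fun g => (ground (subColl A g)).card).sum) := by
  intro γ
  induction γ with
  | nil => intro _ _; simpa [applyComp_nil] using isSP_empty
  | cons g γ ih =>
    intro hne hsub
    rw [applyComp_cons]
    have h1 : IsSP (stdP (subColl A g)) (ground (subColl A g)).card :=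
      stdP_isSP (isPartitionOf_subColl hA (hsub g (List.mem_cons_self)))
    have h2 := ih (fun g' hg' => hne g' (List.mem_cons_of_mem _ hg'))
      (fun g' hg' => hsub g' (List.mem_cons_of_mem _ hg'))
    simpa using isSP_concat h1 h2

lemma applyComp_nu {A : Blocks} {X : Finset ℕ} (hA : IsPartitionOf A X)
    (γ : SComp) (hne : ∀ g ∈ γ, g.Nonempty) (hsub : ∀ g ∈ γ, g ⊆ seg A.card)
    (h : IsSPart (applyComp γ A)) :
    γ.length ≤ nu (mkSP (applyComp γ A) h) := by
  induction γ with
  | nil => simp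
  | cons g γ ih =>
    have h1 : IsSP (stdP (subColl A g)) (ground (subColl A g)).card :=
      stdP_isSP (isPartitionOf_subColl hA (hsub g (List.mem_cons_self)))
    have h2 := applyComp_spec hA γ (fun g' hg' => hne g' (List.mem_cons_of_mem _ hg'))
      (fun g' hg' => hsub g' (List.mem_cons_of_mem _ hg'))
    have hpx : IsSPart (stdP (subColl A g)) := ⟨_, h1⟩
    have hpy : IsSPart (applyComp γ A) := ⟨_, h2⟩
    have hxy : mkSP (applyComp (g :: γ) A) h
        = mkSP (stdP (subColl A g)) hpx * mkSP (applyComp γ A) hpy :=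
      Subtype.ext (applyComp_cons g γ A)
    have hkey : nu (mkSP (applyComp (g :: γ) A) h)
        = nu (mkSP (stdP (subColl A g)) hpx) + nu (mkSP (applyComp γ A) hpy) := by
      rw [hxy, nu_mul]
    have hx1 : 1 ≤ nu (mkSP (stdP (subColl A g)) hpx) := by
      apply nu_pos_of_ne_one
      intro hc
      have hw : wt (mkSP (stdP (subColl A g)) hpx) = 0 := by
        rw [hc]; exact wt_eq_zero_iff.mpr rfl
      rw [wt_eq_of_isSP h1] at hw
      have := ground_subColl_pos hA (hsub g (List.mem_cons_self)) (hne g (List.mem_cons_self))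
      omega
    have hy := ih (fun g' hg' => hne g' (List.mem_cons_of_mem _ hg'))
      (fun g' hg' => hsub g' (List.mem_cons_of_mem _ hg')) hpy
    simp only [List.length_cons]
    omega

lemma disjoint_sunion {γ : SComp} {a : Finset ℕ} (h : ∀ b ∈ γ, Disjoint a b) :
    Disjoint a (sunion γ) := by
  induction γ with
  | nil => simp [sunion]
  | cons b l ih =>
    show Disjoint a (b ∪ sunion l)
    rw [Finset.disjoint_union_right]
    exact ⟨h b (List.mem_cons_self), ih (fun c hc => h c (List.mem_cons_of_mem _ hc))⟩

lemma sum_over_sunion {γ : SComp} (hdis : γ.Pairwise Disjoint) (f : ℕ → ℕ) :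
    (γ.map fun g => ∑ i ∈ g, f i).sum = ∑ i ∈ sunion γ, f i := by
  induction γ with
  | nil => simp [sunion]
  | cons a l ih =>
    have hd : Disjoint a (sunion l) :=
      disjoint_sunion (fun b hb => (List.pairwise_cons.mp hdis).1 b hb)
    rw [List.map_cons, List.sum_cons, ih (List.pairwise_cons.mp hdis).2,
      show sunion (a :: l) = a ∪ sunion l from rfl, Finset.sum_union hd]

/-- total weight of blocks: `∑_{i ∈ seg r} |A_i| = n` -/
lemma sum_blockAt_card {A : Blocks} {n : ℕ} (hA : IsSP A n) :
    ∑ i ∈ seg A.card, (blockAt A i).card = n := by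
  have h1 := ground_card_subColl hA (g := seg A.card) (Finset.Subset.refl _)
  rw [subColl_full hA] at h1
  rw [← h1, ground_card_of_isSP hA]

/-- the weight of `γ[A]` equals `n` when `γ` is a set composition of `seg A.card` -/
lemma applyComp_wt {A : Blocks} {n : ℕ} (hA : IsSP A n) {γ : SComp}
    (hγ : IsSCompOf γ (seg A.card)) :
    IsSP (applyComp γ A) n := by
  obtain ⟨hne, hdis, hsu⟩ := hγ
  have hsub : ∀ g ∈ γ, g ⊆ seg A.card := fun g hg => hsu ▸ subset_sunion hg
  have h := applyComp_spec hA γ hne hsub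
  have heq : ((γ.map fun g => (ground (subColl A g)).card).sum) = n := by
    have h1 : ∀ g ∈ γ, (ground (subColl A g)).card = ∑ i ∈ g, (blockAt A i).card :=
      fun g hg => ground_card_subColl hA (hsub g hg)
    have h2 : (γ.map fun g => (ground (subColl A g)).card)
        = γ.map fun g => ∑ i ∈ g, (blockAt A i).card := List.map_congr_left h1
    rw [h2, sum_over_sunion hdis, hsu, sum_blockAt_card hA]
  rwa [heq] at h

/-- `γ[A] = A` for the trivial composition -/
lemma applyComp_trivial {A : Blocks} {n : ℕ} (hA : IsSP A n) :
    applyComp [seg A.card] A = A := by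
  rw [applyComp_cons, applyComp_nil, concatP_empty, subColl_full hA, stdP_id hA]

/-- a one-letter composition of `seg r` is `[seg r]` -/
lemma scomp_length_one {γ : SComp} {r : ℕ} (hγ : IsSCompOf γ (seg r))
    (h : γ.length = 1) : γ = [seg r] := by
  obtain ⟨g, rfl⟩ := List.length_eq_one_iff.mp h
  have := hγ.2.2
  show [g] = [seg r]
  rw [show sunion [g] = g by simp [sunion]] at this
  rw [this]

lemma scomp_length_zero {γ : SComp} {r : ℕ} (hγ : IsSCompOf γ (seg r))
    (h : γ.length = 0) : r = 0 := by
  rw [List.length_eq_zero_iff] at h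
  subst h
  have := hγ.2.2
  rw [show sunion [] = ∅ from rfl] at this
  have h2 : (∅ : Finset ℕ).card = (seg r).card := by rw [this]
  simp [seg] at h2
  omega

end NCSymProof
namespace NCSymProof

/-! ### Finiteness of set compositions and triangularity of pSP -/

lemma isSCompOf_tail {a : Finset ℕ} {l : SComp} {K : Finset ℕ}
    (h : IsSCompOf (a :: l) K) : IsSCompOf l (sunion l) :=
  ⟨fun g hg => h.1 g (List.mem_cons_of_mem _ hg), (List.pairwise_cons.mp h.2.1).2, rfl⟩

lemma scomp_length_le {γ : SComp} {K : Finset ℕ} (h : IsSCompOf γ K) :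
    γ.length ≤ K.card := by
  induction γ generalizing K with
  | nil => simp
  | cons a l ih =>
    have hK : K = a ∪ sunion l := h.2.2.symm
    have hd : Disjoint a (sunion l) :=
      disjoint_sunion (fun b hb => (List.pairwise_cons.mp h.2.1).1 b hb)
    have hcard : K.card = a.card + (sunion l).card := by
      rw [hK, Finset.card_union_of_disjoint hd]
    have h1 : 1 ≤ a.card := Finset.card_pos.mpr (h.1 a (List.mem_cons_self))
    have h2 := ih (isSCompOf_tail h)
    simp only [List.length_cons]
    omega

instance : Finite {x : Finset ℕ // x ⊆ seg 0} := by
  exact Finite.of_injective (fun x => (⟨x.1, Finset.mem_powerset.mpr x.2⟩ :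
    {y // y ∈ (seg 0).powerset})) (by intro a b h; cases a; cases b; simpa using h)

lemma finite_subtype_subset (r : ℕ) : Finite {x : Finset ℕ // x ⊆ seg r} :=
  Finite.of_injective (fun x => (⟨x.1, Finset.mem_powerset.mpr x.2⟩ :
    {y // y ∈ (seg r).powerset})) (by intro a b h; cases a; cases b; simpa using h)

lemma scomps_finite (r : ℕ) :
    {γ : SComp | IsSCompOf γ (seg r) ∧ 1 ∈ γ.headI}.Finite := by
  have : Finite {x : Finset ℕ // x ⊆ seg r} := finite_subtype_subset r
  apply Set.Finite.subset
    (Set.Finite.image (fun l : List {x : Finset ℕ // x ⊆ seg r} => l.map Subtype.val)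
      (List.finite_length_le _ r))
  intro γ hγ
  obtain ⟨hsc, _⟩ := hγ
  have hsub : ∀ g ∈ γ, g ⊆ seg r := fun g hg => hsc.2.2 ▸ subset_sunion hg
  refine ⟨γ.attach.map (fun g => ⟨g.1, hsub g.1 g.2⟩), ?_, ?_⟩
  · show (γ.attach.map _).length ≤ r
    rw [List.length_map, List.length_attach]
    have := scomp_length_le hsc
    simpa [seg] using this
  · simp

lemma basSP_eq {B : Blocks} (h : IsSPart B) : basSP B = MonoidAlgebra.single (mkSP B h) 1 := by
  rw [basSP, dif_pos h]
  rfl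

lemma card_pos_of_isSP {A : Blocks} {n : ℕ} (hA : IsSP A n) (hn : 1 ≤ n) : 1 ≤ A.card := by
  rcases Finset.eq_empty_or_nonempty A with rfl | h
  · exfalso
    have : ground (∅ : Blocks) = seg n := hA.2.2
    have h1 : (1 : ℕ) ∈ seg n := by simp [seg]; omega
    rw [← this] at h1
    simp [ground] at h1
  · exact Finset.card_pos.mpr h

lemma single_mem_supp {S : Set SP} {B : SP} (c : ℚ) (h : B ∈ S) :
    (MonoidAlgebra.single B c : NCSym2) ∈ MonoidAlgebra.supported ℚ ℚ S := by
  rw [MonoidAlgebra.mem_supported, MonoidAlgebra.coeff_single]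
  intro x hx
  rw [Finset.mem_coe] at hx
  exact (Finset.mem_singleton.mp (Finsupp.support_single_subset hx)) ▸ h

/-- The key triangularity: for an atomic `a`,
`p(a) = bas(a) +` (terms supported on partitions with ≥ 2 atomic factors of the same weight). -/
lemma pSP_atomic_triangular (a : AtomicSP) :
    pSP a.1 - MonoidAlgebra.single a.1 1 ∈
      MonoidAlgebra.supported ℚ ℚ {B : SP | wt B = wt a.1 ∧ 2 ≤ nu B} := by
  obtain ⟨n, hatom⟩ := a.2
  have hA : IsSP a.1.1 n := hatom.1
  have hn : 1 ≤ n := hatom.2.1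
  set A := a.1.1 with hAdef
  set r := A.card with hrdef
  have hr : 1 ≤ r := card_pos_of_isSP hA hn
  obtain ⟨Γ, hΓ⟩ : ∃ t : Finset SComp,
      ↑t = {γ : SComp | IsSCompOf γ (seg r) ∧ 1 ∈ γ.headI} :=
    ⟨(scomps_finite r).toFinset, (scomps_finite r).coe_toFinset⟩
  have hsum : pSP a.1 = ∑ γ ∈ Γ,
      ((-1 : ℚ) ^ (γ.length - 1)) • basSP (applyComp γ A) := by
    rw [pSP, ← hAdef, ← hrdef, ← hΓ, finsum_mem_coe_finset]
  have hγ₀sc : IsSCompOf [seg r] (seg r) := by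
    refine ⟨?_, ?_, ?_⟩
    · intro g hg
      rw [List.mem_singleton] at hg
      subst hg
      exact ⟨1, by simp [seg]; omega⟩
    · simp
    · show seg r ∪ ∅ = seg r
      exact Finset.union_empty _
  have hγ₀ : [seg r] ∈ Γ := by
    rw [← Finset.mem_coe, hΓ, Set.mem_setOf_eq]
    refine ⟨hγ₀sc, ?_⟩
    show (1 : ℕ) ∈ seg r
    simp [seg]; omega
  have htriv : ((-1 : ℚ) ^ (([seg r] : SComp).length - 1)) • basSP (applyComp [seg r] A)
      = MonoidAlgebra.single a.1 1 := by
    rw [applyComp_trivial hA]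
    simp only [List.length_singleton]
    rw [basSP_eq ⟨n, hA⟩]
    have : mkSP A ⟨n, hA⟩ = a.1 := Subtype.ext rfl
    rw [this]
    norm_num
  have hsplit : pSP a.1 = MonoidAlgebra.single a.1 1 + ∑ γ ∈ Γ.erase [seg r],
      ((-1 : ℚ) ^ (γ.length - 1)) • basSP (applyComp γ A) := by
    rw [hsum, ← Finset.add_sum_erase _ _ hγ₀, htriv]
  rw [hsplit]
  rw [add_sub_cancel_left]
  apply Submodule.sum_mem
  intro γ hγ
  have hγS : IsSCompOf γ (seg r) ∧ 1 ∈ γ.headI := by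
    have := Finset.mem_of_mem_erase hγ
    rwa [← Finset.mem_coe, hΓ, Set.mem_setOf_eq] at this
  have hγne : γ ≠ [seg r] := Finset.ne_of_mem_erase hγ
  have hlen : 2 ≤ γ.length := by
    rcases Nat.lt_or_ge γ.length 2 with hl | hl
    · interval_cases h : γ.length
      · exact absurd (scomp_length_zero hγS.1 h) (by omega)
      · exact absurd (scomp_length_one hγS.1 h) hγne
    · exact hl
  have hsp : IsSP (applyComp γ A) n := applyComp_wt hA hγS.1
  have hpart : IsSPart (applyComp γ A) := ⟨n, hsp⟩
  rw [basSP_eq hpart]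
  apply Submodule.smul_mem
  apply single_mem_supp
  constructor
  · rw [wt_eq_of_isSP hsp]
    exact (wt_eq_of_isSP hA).symm
  · have hsub : ∀ g ∈ γ, g ⊆ seg r := fun g hg => hγS.1.2.2 ▸ subset_sunion hg
    have := applyComp_nu hA γ hγS.1.1 hsub hpart
    omega

end NCSymProof
namespace NCSymProof

/-! ### The algebra map and its bijectivity -/

noncomputable abbrev Q : FreeAlgebra ℚ AtomicSP →ₐ[ℚ] NCSym2 :=
  FreeAlgebra.lift ℚ fun A : AtomicSP => pSP A.1

noncomputable abbrev Fequiv : FreeAlgebra ℚ AtomicSP ≃ₐ[ℚ] MonoidAlgebra ℚ (FreeMonoid AtomicSP) :=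
  FreeAlgebra.equivMonoidAlgebraFreeMonoid

noncomputable abbrev G : MonoidAlgebra ℚ (FreeMonoid AtomicSP) →ₐ[ℚ] NCSym2 :=
  Q.comp (Fequiv.symm.toAlgHom)

lemma Fequiv_symm_single_of (a : AtomicSP) :
    Fequiv.symm (MonoidAlgebra.single (FreeMonoid.of a) 1) = FreeAlgebra.ι ℚ a := by
  have h : Fequiv (FreeAlgebra.ι ℚ a) = MonoidAlgebra.single (FreeMonoid.of a) 1 := by
    simp [Fequiv, FreeAlgebra.equivMonoidAlgebraFreeMonoid]
  rw [← h]
  exact AlgEquiv.symm_apply_apply _ _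

lemma G_single_of (a : AtomicSP) :
    G (MonoidAlgebra.single (FreeMonoid.of a) 1) = pSP a.1 := by
  show Q (Fequiv.symm _) = _
  rw [Fequiv_symm_single_of, FreeAlgebra.lift_ι_apply]

lemma G_single_one : G (MonoidAlgebra.single (1 : FreeMonoid AtomicSP) 1) = 1 := by
  rw [← MonoidAlgebra.one_def]
  exact map_one G

lemma single_ofList_cons (a : AtomicSP) (t : List AtomicSP) :
    (MonoidAlgebra.single (FreeMonoid.ofList (a :: t)) 1 : MonoidAlgebra ℚ (FreeMonoid AtomicSP))
      = MonoidAlgebra.single (FreeMonoid.of a) 1 * MonoidAlgebra.single (FreeMonoid.ofList t) 1 := by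
  rw [MonoidAlgebra.single_mul_single, mul_one]
  rfl

/-- the sets used for the triangularity filtration -/
def Tset (w k : ℕ) : Set SP := {B : SP | wt B = w ∧ k ≤ nu B}

lemma single_mem_Tsupported (B : SP) :
    (MonoidAlgebra.single B 1 : NCSym2) ∈ MonoidAlgebra.supported ℚ ℚ (Tset (wt B) (nu B)) :=
  single_mem_supp 1 ⟨rfl, le_refl _⟩

lemma Tsupported_mono {w k k' : ℕ} (h : k ≤ k') :
    MonoidAlgebra.supported ℚ ℚ (Tset w k') ≤ MonoidAlgebra.supported ℚ ℚ (Tset w k) :=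
  MonoidAlgebra.supported_mono (fun B hB => ⟨hB.1, le_trans h hB.2⟩)

open scoped Classical in
lemma mul_Tsupported {f g : NCSym2} {w₁ w₂ k₁ k₂ : ℕ}
    (hf : f ∈ MonoidAlgebra.supported ℚ ℚ (Tset w₁ k₁))
    (hg : g ∈ MonoidAlgebra.supported ℚ ℚ (Tset w₂ k₂)) :
    f * g ∈ MonoidAlgebra.supported ℚ ℚ (Tset (w₁ + w₂) (k₁ + k₂)) := by
  rw [MonoidAlgebra.mem_supported] at hf hg ⊢
  intro B hB
  have hB' : B ∈ (f * g).coeff.support := hB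
  have := MonoidAlgebra.support_coeff_mul_subset f g hB'
  rw [Finset.mem_mul] at this
  obtain ⟨B₁, hB₁, B₂, hB₂, rfl⟩ := this
  have h1 := hf hB₁
  have h2 := hg hB₂
  exact ⟨by rw [wt_mul, h1.1, h2.1], by rw [nu_mul]; exact add_le_add h1.2 h2.2⟩

/-- `G(single w 1) = single (μ w) 1 +` higher terms. -/
lemma G_single_triangular : ∀ t : List AtomicSP,
    G (MonoidAlgebra.single (FreeMonoid.ofList t) 1)
      - MonoidAlgebra.single (mu (FreeMonoid.ofList t)) 1
    ∈ MonoidAlgebra.supported ℚ ℚ (Tset (wt (mu (FreeMonoid.ofList t))) (t.length + 1)) := by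
  intro t
  induction t with
  | nil =>
    have h1 : G (MonoidAlgebra.single (FreeMonoid.ofList ([] : List AtomicSP)) 1) = 1 :=
      G_single_one
    rw [h1, mu_nil, ← MonoidAlgebra.one_def, sub_self]
    exact Submodule.zero_mem _
  | cons a t ih =>
    rw [single_ofList_cons, map_mul, G_single_of, mu_cons]
    set E₁ := pSP a.1 - MonoidAlgebra.single a.1 1 with hE₁
    set E₂ := G (MonoidAlgebra.single (FreeMonoid.ofList t) 1)
      - MonoidAlgebra.single (mu (FreeMonoid.ofList t)) 1 with hE₂
    have hp : pSP a.1 = MonoidAlgebra.single a.1 1 + E₁ := (add_sub_cancel _ _).symm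
    have hgg : G (MonoidAlgebra.single (FreeMonoid.ofList t) 1)
        = MonoidAlgebra.single (mu (FreeMonoid.ofList t)) 1 + E₂ := (add_sub_cancel _ _).symm
    have hss : (MonoidAlgebra.single a.1 1 : NCSym2)
          * MonoidAlgebra.single (mu (FreeMonoid.ofList t)) 1
        = MonoidAlgebra.single (a.1 * mu (FreeMonoid.ofList t)) 1 := by
      rw [MonoidAlgebra.single_mul_single, one_mul]
    have hprod : pSP a.1 * G (MonoidAlgebra.single (FreeMonoid.ofList t) 1)
        = MonoidAlgebra.single (a.1 * mu (FreeMonoid.ofList t)) 1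
          + (MonoidAlgebra.single a.1 1 * E₂ + E₁ * MonoidAlgebra.single (mu (FreeMonoid.ofList t)) 1
            + E₁ * E₂) := by
      rw [hp, hgg, ← hss, add_mul, mul_add, mul_add]
      abel
    rw [hprod, add_sub_cancel_left]
    have hmem1 := pSP_atomic_triangular a
    have hnu_a : 1 ≤ nu a.1 := by
      apply nu_pos_of_ne_one
      intro hc
      have := atomic_wt_pos a
      rw [hc] at this
      rw [wt_eq_zero_iff.mpr rfl] at this
      omega
    have hwt : wt (a.1 * mu (FreeMonoid.ofList t)) = wt a.1 + wt (mu (FreeMonoid.ofList t)) :=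
      wt_mul _ _
    rw [hwt]
    have hnumu : nu (mu (FreeMonoid.ofList t)) = t.length := by
      rw [nu_mu]
      rfl
    simp only [List.length_cons]
    refine Submodule.add_mem _ (Submodule.add_mem _ ?_ ?_) ?_
    · -- single a * E₂  : k = nu a + (t.length + 1) ≥ 1 + t.length + 1
      have := mul_Tsupported (single_mem_Tsupported a.1) ih
      refine Tsupported_mono ?_ this
      omega
    · -- E₁ * single (mu t) : k = 2 + nu (mu t) = 2 + t.length
      have := mul_Tsupported hmem1 (single_mem_Tsupported (mu (FreeMonoid.ofList t)))
      refine Tsupported_mono ?_ this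
      omega
    · -- E₁ * E₂ : k = 2 + t.length + 1
      have := mul_Tsupported hmem1 ih
      refine Tsupported_mono ?_ this
      omega

end NCSymProof
namespace NCSymProof

lemma G_single_tri' (w : FreeMonoid AtomicSP) :
    G (MonoidAlgebra.single w 1) - MonoidAlgebra.single (mu w) 1
    ∈ MonoidAlgebra.supported ℚ ℚ (Tset (wt (mu w)) (FreeMonoid.length w + 1)) :=
  G_single_triangular (FreeMonoid.toList w)

/-- identity coercion from a monoid algebra to its Finsupp representation -/
def toF {G : Type*} (f : MonoidAlgebra ℚ G) : G →₀ ℚ := f.coeff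

lemma toF_single {G : Type*} (a : G) (b : ℚ) :
    toF (MonoidAlgebra.single a b) = Finsupp.single a b := rfl

lemma toF_add {G : Type*} (f g : MonoidAlgebra ℚ G) : toF (f + g) = toF f + toF g := rfl

lemma toF_smul {G : Type*} (c : ℚ) (f : MonoidAlgebra ℚ G) : toF (c • f) = c • toF f := rfl

lemma toF_sum {G I : Type*} (S : Finset I) (f : I → MonoidAlgebra ℚ G) :
    toF (∑ i ∈ S, f i) = ∑ i ∈ S, toF (f i) := MonoidAlgebra.coeff_sum _ _

lemma G_injective : Function.Injective G := by
  classical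
  rw [injective_iff_map_eq_zero]
  intro x hx
  by_contra hne
  have hsupp : (toF x).support.Nonempty := by
    rw [Finsupp.support_nonempty_iff]
    exact fun h0 => hne (MonoidAlgebra.coeff_eq_zero.mp h0)
  obtain ⟨w₀, hw₀, hmin⟩ := Finset.exists_min_image _ FreeMonoid.length hsupp
  have hGx : G x = ∑ w ∈ (toF x).support, (toF x w) • G (MonoidAlgebra.single w 1) := by
    have hxsum : x = ∑ w ∈ (toF x).support, MonoidAlgebra.single w (toF x w) :=
      (MonoidAlgebra.sum_coeff_single x).symm
    conv_lhs => rw [hxsum]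
    rw [map_sum]
    refine Finset.sum_congr rfl fun w _ => ?_
    rw [← map_smul]
    congr 1
    rw [MonoidAlgebra.smul_single, smul_eq_mul, mul_one]
  have hcoeff : toF (G x) (mu w₀) = toF x w₀ := by
    rw [hGx]
    rw [show toF (∑ w ∈ (toF x).support, (toF x w) • G (MonoidAlgebra.single w 1)) (mu w₀)
        = ∑ w ∈ (toF x).support, toF ((toF x w) • G (MonoidAlgebra.single w 1)) (mu w₀) from
      by rw [toF_sum, Finsupp.finset_sum_apply]]
    have hterm : ∀ w ∈ (toF x).support,
        toF ((toF x w) • G (MonoidAlgebra.single w 1)) (mu w₀)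
          = if w = w₀ then toF x w₀ else 0 := by
      intro w hw
      have hE := G_single_tri' w
      have hEzero : toF (G (MonoidAlgebra.single w 1) - MonoidAlgebra.single (mu w) 1) (mu w₀)
          = 0 := by
        rw [← Finsupp.notMem_support_iff]
        intro hmem
        have hT := MonoidAlgebra.mem_supported.mp hE (Finset.mem_coe.mpr hmem)
        obtain ⟨_, hnu⟩ := hT
        rw [nu_mu] at hnu
        have := hmin w hw
        omega
      have hdecomp0 : G (MonoidAlgebra.single w 1)
          = MonoidAlgebra.single (mu w) 1
            + (G (MonoidAlgebra.single w 1) - MonoidAlgebra.single (mu w) 1) :=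
        (add_sub_cancel _ _).symm
      have hdecomp : toF (G (MonoidAlgebra.single w 1)) (mu w₀)
          = toF (MonoidAlgebra.single (mu w) 1) (mu w₀)
            + toF (G (MonoidAlgebra.single w 1) - MonoidAlgebra.single (mu w) 1) (mu w₀) := by
        conv_lhs => rw [hdecomp0]
        rw [toF_add, Finsupp.add_apply]
      rw [show toF ((toF x w) • G (MonoidAlgebra.single w 1)) (mu w₀)
          = (toF x w) * toF (G (MonoidAlgebra.single w 1)) (mu w₀) from
        Finsupp.smul_apply _ _ _]
      rw [hdecomp, hEzero, add_zero, toF_single, Finsupp.single_apply]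
      by_cases h : w = w₀
      · subst h
        simp
      · have hmu : mu w ≠ mu w₀ := fun hc => h (mu_injective hc)
        rw [if_neg hmu, if_neg h, mul_zero]
    rw [Finset.sum_congr rfl hterm, Finset.sum_ite_eq' (toF x).support w₀ (fun _ => toF x w₀),
      if_pos hw₀]
  rw [hx] at hcoeff
  have hne0 : toF x w₀ ≠ 0 := Finsupp.mem_support_iff.mp hw₀
  exact hne0 (by rw [← hcoeff]; rfl)

lemma single_mem_range : ∀ d : ℕ, ∀ B : SP, wt B - nu B < d →
    (MonoidAlgebra.single B 1 : NCSym2) ∈ LinearMap.range G.toLinearMap := by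
  classical
  intro d
  induction d with
  | zero => intro B hB; omega
  | succ d ih =>
    intro B hB
    obtain ⟨w, hw⟩ := mu_surjective B
    have hE := G_single_tri' w
    rw [hw] at hE
    have hlen : FreeMonoid.length w = nu B := by rw [← hw, nu_mu]
    rw [hlen] at hE
    have hmemE : G (MonoidAlgebra.single w 1) - MonoidAlgebra.single B 1
        ∈ LinearMap.range G.toLinearMap := by
      set E := G (MonoidAlgebra.single w 1) - MonoidAlgebra.single B 1 with hEdef
      have hEsum : E = ∑ C ∈ (toF E).support, MonoidAlgebra.single C (toF E C) :=
        (MonoidAlgebra.sum_coeff_single E).symm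
      rw [hEsum]
      apply Submodule.sum_mem
      intro C hC
      have hCT := MonoidAlgebra.mem_supported.mp hE (Finset.mem_coe.mpr hC)
      obtain ⟨hwtC, hnuC⟩ := hCT
      have hnuw : nu C ≤ wt C := nu_le_wt C
      have hd : wt C - nu C < d := by omega
      have hmem := ih C hd
      rw [show (MonoidAlgebra.single C (toF E C) : NCSym2)
          = (toF E C) • (MonoidAlgebra.single C 1 : NCSym2) by
        rw [MonoidAlgebra.smul_single, smul_eq_mul, mul_one]]
      exact Submodule.smul_mem _ _ hmem
    have hGmem : G (MonoidAlgebra.single w 1) ∈ LinearMap.range G.toLinearMap :=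
      ⟨MonoidAlgebra.single w 1, rfl⟩
    have heq : (MonoidAlgebra.single B 1 : NCSym2)
        = G (MonoidAlgebra.single w 1) - (G (MonoidAlgebra.single w 1) - MonoidAlgebra.single B 1) := by
      abel
    rw [heq]
    exact Submodule.sub_mem _ hGmem hmemE

lemma G_surjective : Function.Surjective G := by
  classical
  have hrange : LinearMap.range G.toLinearMap = ⊤ := by
    rw [Submodule.eq_top_iff']
    intro f
    have hfsum : f = ∑ B ∈ (toF f).support, MonoidAlgebra.single B (toF f B) :=
      (MonoidAlgebra.sum_coeff_single f).symm
    rw [hfsum]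
    apply Submodule.sum_mem
    intro B _
    have hB : (MonoidAlgebra.single B 1 : NCSym2) ∈ LinearMap.range G.toLinearMap :=
      single_mem_range (wt B - nu B + 1) B (by omega)
    rw [show (MonoidAlgebra.single B (toF f B) : NCSym2)
        = (toF f B) • (MonoidAlgebra.single B 1 : NCSym2) by
      rw [MonoidAlgebra.smul_single, smul_eq_mul, mul_one]]
    exact Submodule.smul_mem _ _ hB
  intro y
  have hy : y ∈ LinearMap.range G.toLinearMap := by rw [hrange]; trivial
  obtain ⟨x, hxy⟩ := hy
  exact ⟨x, hxy⟩

lemma G_bijective : Function.Bijective G := ⟨G_injective, G_surjective⟩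

end NCSymProof

/-- The elements `p(A)`, for `A` atomic, freely generate `NCSym` as an
algebra: the unique `ℚ`-algebra map from the free associative algebra on the atomic set
partitions to `NCSym` sending the generator indexed by `A` to `p(A)` is an algebra
isomorphism, i.e. bijective.  In particular the `p(A)` (`A` atomic) are algebraically
independent. -/
theorem ncsym_freely_generated_by_pA :
    Function.Bijective
      ((FreeAlgebra.lift ℚ fun A : AtomicSP => pSP A.1 :
        FreeAlgebra ℚ AtomicSP →ₐ[ℚ] NCSym2)) := by
  have hcomp : ⇑(FreeAlgebra.lift ℚ fun A : AtomicSP => pSP A.1 :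
      FreeAlgebra ℚ AtomicSP →ₐ[ℚ] NCSym2) = ⇑NCSymProof.G ∘ ⇑NCSymProof.Fequiv := by
    funext x
    show _ = NCSymProof.Q (NCSymProof.Fequiv.symm (NCSymProof.Fequiv x))
    rw [AlgEquiv.symm_apply_apply]
  rw [hcomp]
  exact NCSymProof.G_bijective.comp NCSymProof.Fequiv.bijective
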